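/- arXiv:2008.11829 — 5 statements merged into one kernel-verified Lean document; each statement's English description precedes it below -/
import Mathlib

section
/- Let C ⊆ ℝⁿ be nonempty, let a ∈ ℝⁿ with aᵢ > 0 for all i, let b ∈ ℝⁿ, and let f : ℝ → ℝ be convex. Suppose that for every family of separable convex objectives the exchange optimality condition holds for minimization over C: a point x ∈ C minimizes ∑ᵢ φᵢ(xᵢ) over C if and only if for every exchangeable pair (i,k) at x one has φₖ⁺(xₖ) ≥ φᵢ⁻(xᵢ). If x ∈ C minimizes the quadratic objective ∑ᵢ aᵢ·(1/2)(xᵢ/aᵢ + bᵢ)², then x also minimizes the (a,b,f)-separable objective ∑ᵢ aᵢ·f(xᵢ/aᵢ + bᵢ) over C. -/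
/-- Left derivative of `g` at `x`. -/
noncomputable def leftDeriv (g : ℝ → ℝ) (x : ℝ) : ℝ := derivWithin g (Set.Iio x) x

/-- Right derivative of `g` at `x`. -/
noncomputable def rightDeriv (g : ℝ → ℝ) (x : ℝ) : ℝ := derivWithin g (Set.Ioi x) x

/-- `(i,k)` is an exchangeable pair at `x ∈ C`: one can shift a small positive amount
from coordinate `i` to coordinate `k` while staying in `C`. -/
def ExchPair {n : ℕ} (C : Set (Fin n → ℝ)) (x : Fin n → ℝ) (i k : Fin n) : Prop :=
  i ≠ k ∧ ∃ ε : ℝ, 0 < ε ∧ x + ε • (Pi.single k 1 - Pi.single i 1) ∈ C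

open Set

section aux

variable {g : ℝ → ℝ}

lemma convAux_right (hg : ConvexOn ℝ Set.univ g) (x : ℝ) :
    HasDerivWithinAt g (sInf (slope g x '' Ioi x)) (Ioi x) x := by
  have hmono : MonotoneOn (slope g x) (univ \ {x}) := hg.slope_mono (mem_univ x)
  have hmono' : MonotoneOn (slope g x) (Ioi x) := by
    intro p hp q hq hpq
    exact hmono ⟨mem_univ _, ne_of_gt hp⟩ ⟨mem_univ _, ne_of_gt hq⟩ hpq
  have hbdd : BddBelow (slope g x '' Ioi x) := by
    refine ⟨slope g x (x - 1), ?_⟩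
    rintro _ ⟨y, hy, rfl⟩
    exact hmono ⟨mem_univ _, by norm_num⟩ ⟨mem_univ _, ne_of_gt hy⟩
      (by linarith [mem_Ioi.mp hy])
  have := hmono'.tendsto_nhdsGT hbdd
  rw [hasDerivWithinAt_iff_tendsto_slope' (by simp : x ∉ Ioi x)]
  exact this

lemma convAux_left (hg : ConvexOn ℝ Set.univ g) (x : ℝ) :
    HasDerivWithinAt g (sSup (slope g x '' Iio x)) (Iio x) x := by
  have hmono : MonotoneOn (slope g x) (univ \ {x}) := hg.slope_mono (mem_univ x)
  have hmono' : MonotoneOn (slope g x) (Iio x) := by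
    intro p hp q hq hpq
    exact hmono ⟨mem_univ _, ne_of_lt hp⟩ ⟨mem_univ _, ne_of_lt hq⟩ hpq
  have hbdd : BddAbove (slope g x '' Iio x) := by
    refine ⟨slope g x (x + 1), ?_⟩
    rintro _ ⟨y, hy, rfl⟩
    exact hmono ⟨mem_univ _, ne_of_lt hy⟩ ⟨mem_univ _, by norm_num⟩
      (by linarith [mem_Iio.mp hy])
  have := hmono'.tendsto_nhdsLT hbdd
  rw [hasDerivWithinAt_iff_tendsto_slope' (by simp : x ∉ Iio x)]
  exact this

lemma leftDeriv_eq (hg : ConvexOn ℝ Set.univ g) (x : ℝ) :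
    leftDeriv g x = sSup (slope g x '' Iio x) :=
  (convAux_left hg x).derivWithin (uniqueDiffWithinAt_Iio x)

lemma rightDeriv_eq (hg : ConvexOn ℝ Set.univ g) (x : ℝ) :
    rightDeriv g x = sInf (slope g x '' Ioi x) :=
  (convAux_right hg x).derivWithin (uniqueDiffWithinAt_Ioi x)

lemma hasDerivWithinAt_leftDeriv (hg : ConvexOn ℝ Set.univ g) (x : ℝ) :
    HasDerivWithinAt g (leftDeriv g x) (Iio x) x := by
  rw [leftDeriv_eq hg]; exact convAux_left hg x

lemma hasDerivWithinAt_rightDeriv (hg : ConvexOn ℝ Set.univ g) (x : ℝ) :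
    HasDerivWithinAt g (rightDeriv g x) (Ioi x) x := by
  rw [rightDeriv_eq hg]; exact convAux_right hg x

/-- monotonicity of one-sided derivatives of a convex function -/
lemma leftDeriv_le_rightDeriv (hg : ConvexOn ℝ Set.univ g) {u v : ℝ} (huv : u ≤ v) :
    leftDeriv g u ≤ rightDeriv g v := by
  have hmu : MonotoneOn (slope g u) (univ \ {u}) := hg.slope_mono (mem_univ u)
  have hmv : MonotoneOn (slope g v) (univ \ {v}) := hg.slope_mono (mem_univ v)
  rw [leftDeriv_eq hg, rightDeriv_eq hg]
  apply csSup_le (by exact ⟨_, ⟨u - 1, by norm_num, rfl⟩⟩)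
  rintro _ ⟨z, hz, rfl⟩
  apply le_csInf (by exact ⟨_, ⟨v + 1, by norm_num, rfl⟩⟩)
  rintro _ ⟨y, hy, rfl⟩
  have hz' : z < u := hz
  have hy' : v < y := hy
  rcases eq_or_lt_of_le huv with rfl | hlt
  · exact hmu ⟨mem_univ _, ne_of_lt hz'⟩ ⟨mem_univ _, ne_of_gt hy'⟩ (by linarith)
  · have h1 : slope g u z ≤ slope g u v :=
      hmu ⟨mem_univ _, ne_of_lt hz'⟩ ⟨mem_univ _, ne_of_gt hlt⟩ (by linarith)
    have h2 : slope g v u ≤ slope g v y :=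
      hmv ⟨mem_univ _, ne_of_lt hlt⟩ ⟨mem_univ _, ne_of_gt hy'⟩ (by linarith)
    calc slope g u z ≤ slope g u v := h1
      _ = slope g v u := slope_comm g u v
      _ ≤ slope g v y := h2

/-- chain rule through the increasing affine map `t ↦ t/c + β`, left version -/
lemma comp_left {c β s d : ℝ} (hc : 0 < c)
    (hd : HasDerivWithinAt g d (Iio (s / c + β)) (s / c + β)) :
    HasDerivWithinAt (fun t => c * g (t / c + β)) d (Iio s) s := by
  have h1 : HasDerivWithinAt (fun t : ℝ => t / c + β) (1 / c) (Iio s) s := by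
    simpa using (((hasDerivAt_id s).div_const c).add_const β).hasDerivWithinAt
  have hmaps : MapsTo (fun t : ℝ => t / c + β) (Iio s) (Iio (s / c + β)) := by
    intro t ht
    have h : t / c < s / c := by
      rw [div_lt_div_iff_of_pos_right hc]; exact ht
    simpa using add_lt_add_right h β
  have := (hd.comp s h1 hmaps).const_mul c
  rw [show c * (d * (1 / c)) = d by field_simp] at this
  exact this

/-- right version -/
lemma comp_right {c β s d : ℝ} (hc : 0 < c)
    (hd : HasDerivWithinAt g d (Ioi (s / c + β)) (s / c + β)) :
    HasDerivWithinAt (fun t => c * g (t / c + β)) d (Ioi s) s := by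
  have h1 : HasDerivWithinAt (fun t : ℝ => t / c + β) (1 / c) (Ioi s) s := by
    simpa using (((hasDerivAt_id s).div_const c).add_const β).hasDerivWithinAt
  have hmaps : MapsTo (fun t : ℝ => t / c + β) (Ioi s) (Ioi (s / c + β)) := by
    intro t ht
    have h : s / c < t / c := by
      rw [div_lt_div_iff_of_pos_right hc]; exact ht
    simpa using add_lt_add_right h β
  have := (hd.comp s h1 hmaps).const_mul c
  rw [show c * (d * (1 / c)) = d by field_simp] at this
  exact this

lemma convexOn_comp_affine (hg : ConvexOn ℝ Set.univ g) {c : ℝ} (hc : 0 < c) (β : ℝ) :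
    ConvexOn ℝ Set.univ (fun t => c * g (t / c + β)) := by
  have h1 : ConvexOn ℝ Set.univ (fun t : ℝ => g (t / c + β)) := by
    have := hg.comp_affineMap (AffineMap.lineMap β (β + 1 / c))
    simp only [Set.preimage_univ, Function.comp_def] at this
    have e : (fun t : ℝ => g (t / c + β)) = fun t => g ((AffineMap.lineMap β (β + 1 / c)) t) := by
      funext t
      rw [AffineMap.lineMap_apply_ring]
      ring_nf
    rw [e]; exact this
  have := h1.smul hc.le
  simpa [smul_eq_mul] using this

lemma sq_half_convex : ConvexOn ℝ Set.univ (fun u : ℝ => (1 : ℝ) / 2 * u ^ 2) := by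
  have := (Even.convexOn_pow (even_two : Even 2)).smul (by norm_num : (0:ℝ) ≤ 1/2)
  simpa [smul_eq_mul] using this

lemma sq_half_hasDerivAt (u : ℝ) : HasDerivAt (fun u : ℝ => (1 : ℝ) / 2 * u ^ 2) u u := by
  have := (hasDerivAt_pow 2 u).const_mul ((1:ℝ)/2)
  simpa using this.congr_deriv (by ring)

end aux

theorem reduction_to_quadratic {n : ℕ} (C : Set (Fin n → ℝ)) (hC : C.Nonempty)
    (a b : Fin n → ℝ) (ha : ∀ i, 0 < a i) (f : ℝ → ℝ) (hf : ConvexOn ℝ Set.univ f)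
    -- the exchange optimality condition holds for every separable convex objective over C
    (hcond : ∀ φ : Fin n → ℝ → ℝ, (∀ i, ConvexOn ℝ Set.univ (φ i)) →
      ∀ x ∈ C, (IsMinOn (fun y => ∑ i, φ i (y i)) C x ↔
        ∀ i k, ExchPair C x i k → leftDeriv (φ i) (x i) ≤ rightDeriv (φ k) (x k)))
    (x : Fin n → ℝ) (hx : x ∈ C)
    (hquad : IsMinOn (fun y => ∑ i, a i * ((1 : ℝ) / 2 * (y i / a i + b i) ^ 2)) C x) :
    IsMinOn (fun y => ∑ i, a i * f (y i / a i + b i)) C x := by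
  set φq : Fin n → ℝ → ℝ := fun i t => a i * ((1 : ℝ) / 2 * (t / a i + b i) ^ 2) with hφq
  set ψ : Fin n → ℝ → ℝ := fun i t => a i * f (t / a i + b i) with hψ
  have hφqconv : ∀ i, ConvexOn ℝ Set.univ (φq i) :=
    fun i => convexOn_comp_affine sq_half_convex (ha i) (b i)
  have hψconv : ∀ i, ConvexOn ℝ Set.univ (ψ i) :=
    fun i => convexOn_comp_affine hf (ha i) (b i)
  -- derivatives of the quadratic pieces
  have hql : ∀ i, leftDeriv (φq i) (x i) = x i / a i + b i := by
    intro i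
    have := comp_left (g := fun u : ℝ => (1:ℝ)/2 * u ^ 2) (ha i)
      ((sq_half_hasDerivAt (x i / a i + b i)).hasDerivWithinAt)
    exact this.derivWithin (uniqueDiffWithinAt_Iio (x i))
  have hqr : ∀ i, rightDeriv (φq i) (x i) = x i / a i + b i := by
    intro i
    have := comp_right (g := fun u : ℝ => (1:ℝ)/2 * u ^ 2) (ha i)
      ((sq_half_hasDerivAt (x i / a i + b i)).hasDerivWithinAt)
    exact this.derivWithin (uniqueDiffWithinAt_Ioi (x i))
  -- exchange condition for the quadratic objective
  have hkey : ∀ i k, ExchPair C x i k → x i / a i + b i ≤ x k / a k + b k := by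
    intro i k hik
    have := ((hcond φq hφqconv x hx).mp hquad) i k hik
    rwa [hql, hqr] at this
  -- derivatives of the f-pieces
  have hfl : ∀ i, leftDeriv (ψ i) (x i) = leftDeriv f (x i / a i + b i) := by
    intro i
    have := comp_left (g := f) (ha i) (hasDerivWithinAt_leftDeriv hf (x i / a i + b i))
    exact this.derivWithin (uniqueDiffWithinAt_Iio (x i))
  have hfr : ∀ i, rightDeriv (ψ i) (x i) = rightDeriv f (x i / a i + b i) := by
    intro i
    have := comp_right (g := f) (ha i) (hasDerivWithinAt_rightDeriv hf (x i / a i + b i))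
    exact this.derivWithin (uniqueDiffWithinAt_Ioi (x i))
  refine (hcond ψ hψconv x hx).mpr ?_
  intro i k hik
  rw [hfl, hfr]
  exact leftDeriv_le_rightDeriv hf (hkey i k hik)
end

section
/- In Algorithm 1, if x̄ᵢᵗ > zᵢ at some step t, then zᵢ ≤ x̄ᵢᵗ' ≤ x̄ᵢᵗ for all t' > t; symmetrically, if x̄ᵢᵗ < zᵢ then zᵢ ≥ x̄ᵢᵗ' ≥ x̄ᵢᵗ for all t' > t; and if x̄ᵢᵗ = zᵢ then x̄ᵢᵗ' = zᵢ for all t' > t. In particular, each coordinate moves monotonically toward its target value zᵢ and never overshoots it. -/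
theorem algorithm_monotone_toward_target {n : ℕ} (x z : Fin n → ℝ)
    (xbar : ℕ → Fin n → ℝ) (h0 : xbar 0 = x)
    (hstep : ∀ t : ℕ,
      xbar (t + 1) = xbar t ∨
      ∃ i k : Fin n, xbar t i > z i ∧ xbar t k < z k ∧
        xbar (t + 1)
          = xbar t + min (xbar t i - z i) (z k - xbar t k) •
              (Pi.single k (1 : ℝ) - Pi.single i (1 : ℝ))) :
    ∀ t : ℕ, ∀ i : Fin n,
      (xbar t i > z i → ∀ t' > t, z i ≤ xbar t' i ∧ xbar t' i ≤ xbar t i) ∧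
      (xbar t i < z i → ∀ t' > t, xbar t i ≤ xbar t' i ∧ xbar t' i ≤ z i) ∧
      (xbar t i = z i → ∀ t' > t, xbar t' i = z i) := by
  have key : ∀ t (i : Fin n),
      (z i ≤ xbar t i → z i ≤ xbar (t+1) i ∧ xbar (t+1) i ≤ xbar t i) ∧
      (xbar t i ≤ z i → xbar t i ≤ xbar (t+1) i ∧ xbar (t+1) i ≤ z i) := by
    intro t i
    rcases hstep t with h | ⟨i0, k0, hi0, hk0, h⟩
    · rw [h]; exact ⟨fun h' => ⟨h', le_refl _⟩, fun h' => ⟨le_refl _, h'⟩⟩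
    · have hmin1 : min (xbar t i0 - z i0) (z k0 - xbar t k0) ≤ xbar t i0 - z i0 :=
        min_le_left _ _
      have hmin2 : min (xbar t i0 - z i0) (z k0 - xbar t k0) ≤ z k0 - xbar t k0 :=
        min_le_right _ _
      have hminpos : 0 < min (xbar t i0 - z i0) (z k0 - xbar t k0) :=
        lt_min (by linarith) (by linarith)
      have hval : xbar (t+1) i = xbar t i + min (xbar t i0 - z i0) (z k0 - xbar t k0)
          * ((if i = k0 then (1:ℝ) else 0) - (if i = i0 then (1:ℝ) else 0)) := by
        rw [h]; simp [Pi.single_apply, smul_eq_mul]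
      have hne : i0 ≠ k0 := by
        intro hh; rw [hh] at hi0; linarith
      by_cases hik : i = i0
      · subst hik
        have hnk : ¬ i = k0 := hne
        rw [if_neg hnk, if_pos rfl] at hval
        refine ⟨fun h' => ⟨?_, ?_⟩, fun h' => ⟨?_, ?_⟩⟩ <;> nlinarith
      · by_cases hik2 : i = k0
        · subst hik2
          rw [if_pos rfl, if_neg hik] at hval
          refine ⟨fun h' => ⟨?_, ?_⟩, fun h' => ⟨?_, ?_⟩⟩ <;> nlinarith
        · rw [if_neg hik2, if_neg hik] at hval
          simp only [sub_zero, mul_zero, add_zero, sub_self] at hval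
          rw [hval]
          exact ⟨fun h' => ⟨h', le_refl _⟩, fun h' => ⟨le_refl _, h'⟩⟩
  have main : ∀ t (i : Fin n), ∀ t', t ≤ t' →
      (z i ≤ xbar t i → z i ≤ xbar t' i ∧ xbar t' i ≤ xbar t i) ∧
      (xbar t i ≤ z i → xbar t i ≤ xbar t' i ∧ xbar t' i ≤ z i) := by
    intro t i t' ht'
    induction t' , ht' using Nat.le_induction with
    | base => exact ⟨fun h' => ⟨h', le_refl _⟩, fun h' => ⟨le_refl _, h'⟩⟩
    | succ m hm ih =>
      obtain ⟨ih1, ih2⟩ := ih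
      constructor
      · intro h'
        obtain ⟨a, b⟩ := ih1 h'
        obtain ⟨c, d⟩ := (key m i).1 a
        exact ⟨c, le_trans d b⟩
      · intro h'
        obtain ⟨a, b⟩ := ih2 h'
        obtain ⟨c, d⟩ := (key m i).2 b
        exact ⟨le_trans a c, d⟩
  intro t i
  refine ⟨fun h t' ht' => (main t i t' (le_of_lt ht')).1 (le_of_lt h),
    fun h t' ht' => (main t i t' (le_of_lt ht')).2 (le_of_lt h), fun h t' ht' => ?_⟩
  obtain ⟨a, b⟩ := (main t i t' (le_of_lt ht')).1 (le_of_eq h.symm)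
  rw [h] at b
  exact le_antisymm b a
end

section
/- Let x, z ∈ ℝⁿ with ∑ᵢ xᵢ = ∑ᵢ zᵢ. Then z - x can be written as a finite nonnegative combination ∑_{(i,k)} λ_{ik}(eᵏ - eⁱ) with λ_{ik} ≥ 0, where λ_{ik} > 0 only if xᵢ > zᵢ and xₖ < zₖ. -/
theorem diff_conic_combination {n : ℕ} (x z : Fin n → ℝ)
    (hsum : ∑ i, x i = ∑ i, z i) :
    ∃ lam : Fin n → Fin n → ℝ,
      (∀ i k, 0 ≤ lam i k) ∧
      (∀ i k, 0 < lam i k → x i > z i ∧ x k < z k) ∧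
      z - x = ∑ i, ∑ k, lam i k • (Pi.single k (1 : ℝ) - Pi.single i (1 : ℝ)) := by
  set d : Fin n → ℝ := fun j => z j - x j with hd
  have hdsum : ∑ j, d j = 0 := by
    simp [hd, Finset.sum_sub_distrib, hsum]
  set S : ℝ := ∑ j, max (d j) 0 with hS
  have hSnonneg : 0 ≤ S := Finset.sum_nonneg fun j _ => le_max_right _ _
  have hSneg : ∑ j, max (-(d j)) 0 = S := by
    have : ∀ j : Fin n, max (d j) 0 - max (-(d j)) 0 = d j := by
      intro j
      rcases le_total (d j) 0 with h | h
      · rw [max_eq_right h, max_eq_left (by linarith)]; ring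
      · rw [max_eq_left h, max_eq_right (by linarith)]; ring
    have h2 : ∑ j, (max (d j) 0 - max (-(d j)) 0) = 0 := by
      rw [Finset.sum_congr rfl fun j _ => this j]; exact hdsum
    rw [Finset.sum_sub_distrib] at h2
    linarith
  by_cases hS0 : S = 0
  · -- all d j = 0
    have hd0 : ∀ j, d j = 0 := by
      have hle : ∀ j : Fin n, d j ≤ 0 := by
        intro j
        have := Finset.sum_eq_zero_iff_of_nonneg
          (fun j _ => le_max_right (d j) 0) |>.mp hS0 j (Finset.mem_univ j)
        have := le_max_left (d j) 0
        linarith [max_eq_right_iff.mp ‹max (d j) 0 = 0›]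
      intro j
      by_contra hne
      have hlt : d j < 0 := lt_of_le_of_ne (hle j) hne
      have : ∑ i, d i < 0 := by
        calc ∑ i, d i ≤ ∑ i ∈ Finset.univ \ {j}, d i + d j := by
              rw [Finset.sum_eq_sum_sdiff_singleton_add (Finset.mem_univ j)]
          _ < 0 + 0 := by
              have : ∑ i ∈ Finset.univ \ {j}, d i ≤ 0 :=
                Finset.sum_nonpos fun i _ => hle i
              linarith
          _ = 0 := by ring
      linarith [hdsum]
    refine ⟨fun _ _ => 0, fun _ _ => le_refl _, fun i k h => absurd h (lt_irrefl 0), ?_⟩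
    funext j
    simp only [Pi.sub_apply, zero_smul, Finset.sum_const_zero, Pi.zero_apply,
      Finset.sum_apply, Pi.smul_apply]
    simpa using (hd0 j)
  · have hSpos : 0 < S := lt_of_le_of_ne hSnonneg (Ne.symm hS0)
    refine ⟨fun i k => max (-(d i)) 0 * max (d k) 0 / S, ?_, ?_, ?_⟩
    · intro i k
      positivity
    · intro i k h
      have h1 : 0 < max (-(d i)) 0 * max (d k) 0 := by
        by_contra hc
        push_neg at hc
        have : max (-(d i)) 0 * max (d k) 0 / S ≤ 0 := div_nonpos_of_nonpos_of_nonneg hc hSnonneg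
        linarith
      have hi : 0 < max (-(d i)) 0 := by
        rcases mul_pos_iff.mp h1 with ⟨a, _⟩ | ⟨_, b⟩
        · exact a
        · linarith [le_max_right (d k) 0]
      have hk : 0 < max (d k) 0 := by
        rcases mul_pos_iff.mp h1 with ⟨_, b⟩ | ⟨a, _⟩
        · exact b
        · linarith [le_max_right (-(d i)) 0]
      constructor
      · have : 0 < -(d i) := by
          rcases max_cases (-(d i)) 0 with ⟨h1, _⟩ | ⟨h1, _⟩ <;> linarith [hi]
        simp only [hd] at this; linarith
      · have : 0 < d k := by
          rcases max_cases (d k) 0 with ⟨h1, _⟩ | ⟨h1, _⟩ <;> linarith [hk]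
        simp only [hd] at this; linarith
    · funext j
      simp only [Finset.sum_apply, Pi.smul_apply, Pi.sub_apply, smul_eq_mul]
      simp only [mul_sub, Finset.sum_sub_distrib]
      have hA : ∑ i : Fin n, ∑ k : Fin n, max (-(d i)) 0 * max (d k) 0 / S *
          ((Pi.single k 1 : Fin n → ℝ) j) = max (d j) 0 := by
        have : ∀ i : Fin n, ∑ k : Fin n, max (-(d i)) 0 * max (d k) 0 / S *
            ((Pi.single k 1 : Fin n → ℝ) j) = max (-(d i)) 0 * max (d j) 0 / S := by
          intro i
          rw [Finset.sum_eq_single j]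
          · simp [Pi.single_eq_same]
          · intro k _ hk; simp [Pi.single_eq_of_ne (Ne.symm hk)]
          · intro h; exact absurd (Finset.mem_univ j) h
        rw [Finset.sum_congr rfl fun i _ => this i]
        rw [← Finset.sum_div, ← Finset.sum_mul, hSneg]
        field_simp
      have hB : ∑ i : Fin n, ∑ k : Fin n, max (-(d i)) 0 * max (d k) 0 / S *
          ((Pi.single i 1 : Fin n → ℝ) j) = max (-(d j)) 0 := by
        have : ∀ i : Fin n, ∑ k : Fin n, max (-(d i)) 0 * max (d k) 0 / S *
            ((Pi.single i 1 : Fin n → ℝ) j) = max (-(d i)) 0 * S / S * ((Pi.single i 1 : Fin n → ℝ) j) := by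
          intro i
          rw [← Finset.sum_mul, ← Finset.sum_div, ← Finset.mul_sum, ← hS]
        rw [Finset.sum_congr rfl fun i _ => this i]
        rw [Finset.sum_eq_single j]
        · rw [Pi.single_eq_same]; field_simp
        · intro i _ hi; simp [Pi.single_eq_of_ne (Ne.symm hi)]
        · intro h; exact absurd (Finset.mem_univ j) h
      rw [hA, hB]
      rcases le_total (d j) 0 with h | h
      · rw [max_eq_right h, max_eq_left (by linarith)]; simp [hd]
      · rw [max_eq_left h, max_eq_right (by linarith)]; simp [hd]
end

section
/- Consider minimization of ∑ᵢ φᵢ(xᵢ) over the laminar-constrained set C' := {x ∈ ℝⁿ : ∑ᵢ xᵢ = R, Lⱼ ≤ ∑_{i∈Nⱼ} xᵢ ≤ Uⱼ for all j}, with each φᵢ convex. If x ∈ C' satisfies φₖ⁺(xₖ) ≥ φᵢ⁻(xᵢ) for every exchangeable pair (i,k) ∈ E_{C'}(x), then x is optimal: ∑ᵢ φᵢ(zᵢ) ≥ ∑ᵢ φᵢ(xᵢ) for every z ∈ C'. -/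
section auxiliary
open Set


lemma convex_diffWithin_Iio {g : ℝ → ℝ} (hg : ConvexOn ℝ Set.univ g) (c : ℝ) :
    DifferentiableWithinAt ℝ g (Set.Iio c) c := by
  have mono : MonotoneOn (slope g c) (Set.Iio c) := by
    intro a ha b hb hab
    exact hg.slope_mono (mem_univ c) ⟨mem_univ a, ne_of_lt ha⟩ ⟨mem_univ b, ne_of_lt hb⟩ hab
  have bdd : BddAbove (slope g c '' Set.Iio c) := by
    refine ⟨slope g c (c+1), ?_⟩
    rintro _ ⟨a, ha, rfl⟩
    exact hg.slope_mono (mem_univ c) ⟨mem_univ a, ne_of_lt ha⟩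
      ⟨mem_univ _, by simp only [Set.mem_singleton_iff]; intro h; linarith⟩ (by simp at ha ⊢; linarith)
  have ht := mono.tendsto_nhdsLT bdd
  have : HasDerivWithinAt g (sSup (slope g c '' Set.Iio c)) (Set.Iio c) c := by
    rw [hasDerivWithinAt_iff_tendsto_slope' (by simp)]
    exact ht
  exact this.differentiableWithinAt

lemma convex_diffWithin_Ioi {g : ℝ → ℝ} (hg : ConvexOn ℝ Set.univ g) (c : ℝ) :
    DifferentiableWithinAt ℝ g (Set.Ioi c) c := by
  have mono : MonotoneOn (slope g c) (Set.Ioi c) := by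
    intro a ha b hb hab
    exact hg.slope_mono (mem_univ c) ⟨mem_univ a, ne_of_gt ha⟩ ⟨mem_univ b, ne_of_gt hb⟩ hab
  have bdd : BddBelow (slope g c '' Set.Ioi c) := by
    refine ⟨slope g c (c-1), ?_⟩
    rintro _ ⟨a, ha, rfl⟩
    exact hg.slope_mono (mem_univ c) ⟨mem_univ _, by simp only [Set.mem_singleton_iff]; intro h; linarith⟩
      ⟨mem_univ a, ne_of_gt ha⟩ (by simp at ha ⊢; linarith)
  have ht := mono.tendsto_nhdsGT bdd
  have : HasDerivWithinAt g (sInf (slope g c '' Set.Ioi c)) (Set.Ioi c) c := by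
    rw [hasDerivWithinAt_iff_tendsto_slope' (by simp)]
    exact ht
  exact this.differentiableWithinAt

lemma slope_le_leftDeriv {g : ℝ → ℝ} (hg : ConvexOn ℝ Set.univ g) {a b c : ℝ}
    (hab : a < b) (hbc : b ≤ c) : (g b - g a) / (b - a) ≤ leftDeriv g c := by
  have h1 : slope g a b ≤ slope g a c := by
    rcases eq_or_lt_of_le hbc with h | h
    · rw [h]
    · exact hg.slope_mono (mem_univ a) ⟨mem_univ b, ne_of_gt hab⟩
        ⟨mem_univ c, ne_of_gt (hab.trans h)⟩ hbc
  have h2 : slope g a c ≤ leftDeriv g c :=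
    hg.slope_le_leftDeriv (mem_univ a) (mem_univ c) (lt_of_lt_of_le hab hbc)
      (convex_diffWithin_Iio hg c)
  rw [slope_def_field] at h1
  linarith

lemma rightDeriv_le_slope {g : ℝ → ℝ} (hg : ConvexOn ℝ Set.univ g) {a b c : ℝ}
    (hca : c ≤ a) (hab : a < b) : rightDeriv g c ≤ (g b - g a) / (b - a) := by
  have h2 : rightDeriv g c ≤ slope g c b :=
    hg.rightDeriv_le_slope (mem_univ c) (mem_univ b) (lt_of_le_of_lt hca hab)
      (convex_diffWithin_Ioi hg c)
  have h1 : slope g c b ≤ slope g a b := by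
    rcases eq_or_lt_of_le hca with h | h
    · rw [h]
    · rw [slope_comm g c b, slope_comm g a b]
      exact hg.slope_mono (mem_univ b) ⟨mem_univ c, ne_of_lt (h.trans hab)⟩
        ⟨mem_univ a, ne_of_lt hab⟩ hca
  rw [slope_def_field g a b] at h1
  linarith



lemma exists_exchange_pair {n m : ℕ} (Nset : Fin m → Finset (Fin n))
    (hlam : ∀ j ℓ, Nset j ∩ Nset ℓ = ∅ ∨ Nset j ⊆ Nset ℓ ∨ Nset ℓ ⊆ Nset j)
    (d : Fin n → ℝ) (hsum : ∑ i, d i = 0) (i0 : Fin n) (hi0 : d i0 ≠ 0) :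
    ∃ i k : Fin n, i ≠ k ∧ d i < 0 ∧ 0 < d k ∧
      (∀ j, k ∈ Nset j → i ∉ Nset j → 0 < ∑ p ∈ Nset j, d p) ∧
      (∀ j, i ∈ Nset j → k ∉ Nset j → ∑ p ∈ Nset j, d p < 0) := by
  classical
  have hex : ∃ i, d i < 0 := by
    by_contra h
    push_neg at h
    exact hi0 ((Finset.sum_eq_zero_iff_of_nonneg (fun q _ => h q)).mp hsum i0 (Finset.mem_univ i0))
  obtain ⟨i, hi⟩ := hex
  set F : Finset (Finset (Fin n)) := Finset.univ.image Nset ∪ {Finset.univ} with hF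
  set C : Finset (Finset (Fin n)) :=
    F.filter (fun S => i ∈ S ∧ 0 ≤ ∑ p ∈ S, d p) with hC
  have hCne : (Finset.univ : Finset (Fin n)) ∈ C := by
    refine Finset.mem_filter.mpr ⟨Finset.mem_union_right _ (Finset.mem_singleton_self _), Finset.mem_univ i, ?_⟩
    rw [hsum]
  obtain ⟨T, hTC, hTmin⟩ := Finset.exists_min_image C Finset.card ⟨_, hCne⟩
  have hTF : T ∈ F := (Finset.mem_filter.mp hTC).1
  obtain ⟨hiT, hTsum⟩ := (Finset.mem_filter.mp hTC).2
  have hmin : ∀ j, i ∈ Nset j → Nset j ⊂ T → ∑ p ∈ Nset j, d p < 0 := by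
    intro j hij hsub
    by_contra h
    push_neg at h
    have hjC : Nset j ∈ C := Finset.mem_filter.mpr
      ⟨Finset.mem_union_left _ (Finset.mem_image_of_mem Nset (Finset.mem_univ j)), hij, h⟩
    exact absurd (Finset.card_lt_card hsub) (not_lt.mpr (hTmin _ hjC))
  set B : Finset (Finset (Fin n)) :=
    (Finset.univ.image Nset).filter (fun S => S ⊂ T ∧ ∑ p ∈ S, d p ≤ 0) with hB
  set M : Finset (Finset (Fin n)) := B.filter (fun S => ∀ S' ∈ B, S ⊆ S' → S = S') with hM
  have hBM : ∀ S ∈ B, ∃ A ∈ M, S ⊆ A := by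
    intro S hS
    obtain ⟨A, hA, hAmax⟩ := Finset.exists_max_image (B.filter (fun A => S ⊆ A)) Finset.card
      ⟨S, Finset.mem_filter.mpr ⟨hS, Finset.Subset.refl S⟩⟩
    obtain ⟨hAB, hSA⟩ := Finset.mem_filter.mp hA
    refine ⟨A, Finset.mem_filter.mpr ⟨hAB, ?_⟩, hSA⟩
    intro S' hS' hAS'
    exact Finset.eq_of_subset_of_card_le hAS'
      (hAmax S' (Finset.mem_filter.mpr ⟨hS', hSA.trans hAS'⟩))
  have hMdisj : (↑M : Set (Finset (Fin n))).PairwiseDisjoint id := by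
    intro A hA A' hA' hne
    simp only [Finset.coe_mem, Finset.mem_coe] at hA hA'
    obtain ⟨hAB, hAmax⟩ := Finset.mem_filter.mp hA
    obtain ⟨hA'B, hA'max⟩ := Finset.mem_filter.mp hA'
    obtain ⟨jA, -, hjA⟩ := Finset.mem_image.mp (Finset.mem_filter.mp hAB).1
    obtain ⟨jA', -, hjA'⟩ := Finset.mem_image.mp (Finset.mem_filter.mp hA'B).1
    rcases hlam jA jA' with h | h | h
    · refine Finset.disjoint_left.mpr (fun p hpA hpA' => ?_)
      have : p ∈ Nset jA ∩ Nset jA' := Finset.mem_inter.mpr ⟨hjA ▸ hpA, hjA' ▸ hpA'⟩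
      rw [h] at this
      exact absurd this (Finset.notMem_empty p)
    · exact absurd (hAmax A' hA'B (by rw [← hjA, ← hjA']; exact h)) hne
    · exact absurd (hA'max A hAB (by rw [← hjA, ← hjA']; exact h)).symm hne
  set W : Finset (Fin n) := M.biUnion id with hW
  have hWsum : ∑ p ∈ W, d p = ∑ A ∈ M, ∑ p ∈ A, d p := Finset.sum_biUnion hMdisj
  have hsumA : ∀ A ∈ M, ∑ p ∈ A, d p ≤ 0 := by
    intro A hA
    exact (Finset.mem_filter.mp ((Finset.mem_filter.mp hA).1)).2.2
  have hWnonpos : ∑ p ∈ W, d p ≤ 0 := by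
    rw [hWsum]; exact Finset.sum_nonpos hsumA
  have hWT : W ⊆ T := by
    intro p hp
    obtain ⟨A, hA, hpA⟩ := Finset.mem_biUnion.mp hp
    exact ((Finset.mem_filter.mp ((Finset.mem_filter.mp hA).1)).2.1).subset hpA
  have hWneg : i ∈ W → ∑ p ∈ W, d p < 0 := by
    intro hiW
    obtain ⟨A, hAM, hiA⟩ := Finset.mem_biUnion.mp hiW
    have hAB := (Finset.mem_filter.mp hAM).1
    have hAim := (Finset.mem_filter.mp hAB).1
    have hAT := (Finset.mem_filter.mp hAB).2.1
    obtain ⟨j, -, hj⟩ := Finset.mem_image.mp hAim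
    have hAneg : ∑ p ∈ A, d p < 0 := by
      rw [← hj]
      exact hmin j (by rw [hj]; exact hiA) (by rw [hj]; exact hAT)
    rw [hWsum, ← Finset.add_sum_erase _ _ hAM]
    have h2 : ∑ A' ∈ M.erase A, ∑ p ∈ A', d p ≤ 0 :=
      Finset.sum_nonpos (fun A' hA' => hsumA A' (Finset.mem_of_mem_erase hA'))
    linarith
  have hTWsum : ∑ p ∈ T \ W, d p = ∑ p ∈ T, d p - ∑ p ∈ W, d p :=
    Finset.sum_sdiff_eq_sub hWT
  have hk : ∃ k ∈ T \ W, 0 < d k := by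
    by_cases hiW : i ∈ W
    · have hpos : 0 < ∑ p ∈ T \ W, d p := by
        rw [hTWsum]; linarith [hWneg hiW]
      by_contra h
      push_neg at h
      exact absurd (Finset.sum_nonpos h) (not_le.mpr hpos)
    · have hiTW : i ∈ T \ W := Finset.mem_sdiff.mpr ⟨hiT, hiW⟩
      have hpos : 0 < ∑ p ∈ (T \ W).erase i, d p := by
        have := Finset.add_sum_erase _ d hiTW
        rw [hTWsum] at this
        linarith
      by_contra h
      push_neg at h
      have : ∑ p ∈ (T \ W).erase i, d p ≤ 0 :=
        Finset.sum_nonpos (fun p hp => h p (Finset.mem_of_mem_erase hp))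
      linarith
  obtain ⟨k, hkTW, hdk⟩ := hk
  have hkT : k ∈ T := (Finset.mem_sdiff.mp hkTW).1
  have hkW : k ∉ W := (Finset.mem_sdiff.mp hkTW).2
  have hik : i ≠ k := by intro h; rw [h] at hi; linarith
  have subT : ∀ j : Fin m, ((k ∈ Nset j ∧ i ∉ Nset j) ∨ (i ∈ Nset j ∧ k ∉ Nset j)) →
      Nset j ⊂ T := by
    intro j hj
    rcases Finset.mem_union.mp hTF with hT1 | hT2
    · obtain ⟨j0, -, hj0⟩ := Finset.mem_image.mp hT1
      rcases hlam j j0 with h | h | h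
      · exfalso
        rcases hj with ⟨h1, -⟩ | ⟨h1, -⟩
        · have : k ∈ Nset j ∩ Nset j0 := Finset.mem_inter.mpr ⟨h1, by rw [hj0]; exact hkT⟩
          rw [h] at this; exact absurd this (Finset.notMem_empty k)
        · have : i ∈ Nset j ∩ Nset j0 := Finset.mem_inter.mpr ⟨h1, by rw [hj0]; exact hiT⟩
          rw [h] at this; exact absurd this (Finset.notMem_empty i)
      · have hsub : Nset j ⊆ T := by rw [← hj0]; exact h
        refine (Finset.ssubset_iff_of_subset hsub).mpr ?_
        rcases hj with ⟨-, h2⟩ | ⟨-, h2⟩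
        · exact ⟨i, hiT, h2⟩
        · exact ⟨k, hkT, h2⟩
      · exfalso
        have hsub : T ⊆ Nset j := by rw [← hj0]; exact h
        rcases hj with ⟨-, h2⟩ | ⟨-, h2⟩
        · exact h2 (hsub hiT)
        · exact h2 (hsub hkT)
    · have hTu : T = Finset.univ := Finset.mem_singleton.mp hT2
      rw [hTu]
      refine (Finset.ssubset_iff_of_subset (Finset.subset_univ _)).mpr ?_
      rcases hj with ⟨-, h2⟩ | ⟨-, h2⟩
      · exact ⟨i, Finset.mem_univ i, h2⟩
      · exact ⟨k, Finset.mem_univ k, h2⟩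
  refine ⟨i, k, hik, hi, hdk, ?_, ?_⟩
  · intro j hkj hij
    by_contra h
    push_neg at h
    have hjB : Nset j ∈ B := Finset.mem_filter.mpr
      ⟨Finset.mem_image_of_mem Nset (Finset.mem_univ j), subT j (Or.inl ⟨hkj, hij⟩), h⟩
    obtain ⟨A, hAM, hsubA⟩ := hBM _ hjB
    exact hkW (Finset.mem_biUnion.mpr ⟨A, hAM, hsubA hkj⟩)
  · intro j hij hkj
    exact hmin j hij (subT j (Or.inr ⟨hij, hkj⟩))

end auxiliary

theorem laminar_condition_sufficiency {n m : ℕ}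
    (Nset : Fin m → Finset (Fin n))
    (hlam : ∀ j ℓ, Nset j ∩ Nset ℓ = ∅ ∨ Nset j ⊆ Nset ℓ ∨ Nset ℓ ⊆ Nset j)
    (R : ℝ) (L U : Fin m → ℝ)
    (φ : Fin n → ℝ → ℝ) (hφ : ∀ i, ConvexOn ℝ Set.univ (φ i))
    (C' : Set (Fin n → ℝ))
    (hC' : C' = {x : Fin n → ℝ | (∑ i, x i) = R ∧
      ∀ j, L j ≤ ∑ i ∈ Nset j, x i ∧ (∑ i ∈ Nset j, x i) ≤ U j})
    (x : Fin n → ℝ) (hx : x ∈ C')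
    (hcond : ∀ i k : Fin n, i ≠ k →
      (∃ ε : ℝ, 0 < ε ∧ x + ε • (Pi.single k (1 : ℝ) - Pi.single i (1 : ℝ)) ∈ C') →
      leftDeriv (φ i) (x i) ≤ rightDeriv (φ k) (x k)) :
    ∀ z ∈ C', ∑ i, φ i (x i) ≤ ∑ i, φ i (z i) := by
  classical
  subst hC'
  obtain ⟨hxR, hxLU⟩ := hx
  have MAIN : ∀ N : ℕ, ∀ d : Fin n → ℝ,
      ((Finset.univ.filter (fun p => d p ≠ 0)).card
      + (Finset.univ.filter (fun j : Fin m =>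
          (∑ p ∈ Nset j, x p = L j) ∧ 0 < ∑ p ∈ Nset j, d p)).card
      + (Finset.univ.filter (fun j : Fin m =>
          (∑ p ∈ Nset j, x p = U j) ∧ ∑ p ∈ Nset j, d p < 0)).card) ≤ N →
      (∑ p, d p = 0) →
      (∀ j, ∑ p ∈ Nset j, x p = L j → 0 ≤ ∑ p ∈ Nset j, d p) →
      (∀ j, ∑ p ∈ Nset j, x p = U j → ∑ p ∈ Nset j, d p ≤ 0) →
      ∑ p, φ p (x p) ≤ ∑ p, φ p (x p + d p) := by
    intro N
    induction N with
    | zero =>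
      intro d hm _ _ _
      have h0 : ∀ p, d p = 0 := by
        intro p
        by_contra hp
        have hmem : p ∈ Finset.univ.filter (fun p => d p ≠ 0) :=
          Finset.mem_filter.mpr ⟨Finset.mem_univ p, hp⟩
        have := Finset.card_pos.mpr ⟨p, hmem⟩
        omega
      apply le_of_eq
      exact Finset.sum_congr rfl (fun p _ => by rw [h0 p, add_zero])
    | succ N ih =>
      intro d hm hsum hI2 hI3
      by_cases hd0 : ∀ p, d p = 0
      · apply le_of_eq
        exact Finset.sum_congr rfl (fun p _ => by rw [hd0 p, add_zero])
      push_neg at hd0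
      obtain ⟨p0, hp0⟩ := hd0
      obtain ⟨i, k, hik, hdi, hdk, ha, hb⟩ := exists_exchange_pair Nset hlam d hsum p0 hp0
      -- the exchange step size
      set v : Fin m → ℝ := fun j =>
        if (∑ p ∈ Nset j, x p = L j ∧ k ∈ Nset j ∧ i ∉ Nset j) then ∑ p ∈ Nset j, d p
        else if (∑ p ∈ Nset j, x p = U j ∧ i ∈ Nset j ∧ k ∉ Nset j) then -∑ p ∈ Nset j, d p
        else -d i with hv
      set Λ : Finset ℝ := insert (-d i) (insert (d k) (Finset.univ.image v)) with hΛ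
      have hΛne : Λ.Nonempty := ⟨-d i, Finset.mem_insert_self _ _⟩
      set lam : ℝ := Λ.min' hΛne with hlamdef
      have hmempos : ∀ a ∈ Λ, 0 < a := by
        intro a haa
        rcases Finset.mem_insert.mp haa with rfl | haa
        · linarith
        rcases Finset.mem_insert.mp haa with rfl | haa
        · exact hdk
        obtain ⟨j, -, rfl⟩ := Finset.mem_image.mp haa
        by_cases c1 : ∑ p ∈ Nset j, x p = L j ∧ k ∈ Nset j ∧ i ∉ Nset j
        · rw [hv]; simp only [if_pos c1]; exact ha j c1.2.1 c1.2.2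
        by_cases c2 : ∑ p ∈ Nset j, x p = U j ∧ i ∈ Nset j ∧ k ∉ Nset j
        · rw [hv]; simp only [if_neg c1, if_pos c2]
          have := hb j c2.2.1 c2.2.2; linarith
        · rw [hv]; simp only [if_neg c1, if_neg c2]; linarith
      have hlampos : 0 < lam := hmempos _ (Finset.min'_mem _ _)
      have hlam_i : lam ≤ -d i := Finset.min'_le _ _ (Finset.mem_insert_self _ _)
      have hlam_k : lam ≤ d k := Finset.min'_le _ _
        (Finset.mem_insert.mpr (Or.inr (Finset.mem_insert_self _ _)))
      have hlam_v : ∀ j, lam ≤ v j := fun j => Finset.min'_le _ _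
        (Finset.mem_insert.mpr (Or.inr (Finset.mem_insert.mpr (Or.inr
          (Finset.mem_image_of_mem v (Finset.mem_univ j))))))
      -- exchangeability and the derivative condition
      have hexch : leftDeriv (φ i) (x i) ≤ rightDeriv (φ k) (x k) := by
        apply hcond i k hik
        set w : Fin m → ℝ := fun j =>
          if (k ∈ Nset j ∧ i ∉ Nset j) then U j - ∑ p ∈ Nset j, x p
          else if (i ∈ Nset j ∧ k ∉ Nset j) then (∑ p ∈ Nset j, x p) - L j
          else 1 with hw
        set E : Finset ℝ := insert (1:ℝ) (Finset.univ.image w) with hE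
        have hEne : E.Nonempty := ⟨1, Finset.mem_insert_self _ _⟩
        set eps : ℝ := E.min' hEne with hepsdef
        have hEpos : ∀ a ∈ E, 0 < a := by
          intro a haa
          rcases Finset.mem_insert.mp haa with rfl | haa
          · norm_num
          obtain ⟨j, -, rfl⟩ := Finset.mem_image.mp haa
          by_cases c1 : k ∈ Nset j ∧ i ∉ Nset j
          · rw [hw]; simp only [if_pos c1]
            rcases lt_or_eq_of_le (hxLU j).2 with h | h
            · linarith
            · have := hI3 j h
              have := ha j c1.1 c1.2
              linarith
          by_cases c2 : i ∈ Nset j ∧ k ∉ Nset j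
          · rw [hw]; simp only [if_neg c1, if_pos c2]
            rcases lt_or_eq_of_le (hxLU j).1 with h | h
            · linarith
            · have := hI2 j h.symm
              have := hb j c2.1 c2.2
              linarith
          · rw [hw]; simp only [if_neg c1, if_neg c2]; norm_num
        have hepspos : 0 < eps := hEpos _ (Finset.min'_mem _ _)
        have heps_w : ∀ j, eps ≤ w j := fun j => Finset.min'_le _ _
          (Finset.mem_insert.mpr (Or.inr (Finset.mem_image_of_mem w (Finset.mem_univ j))))
        refine ⟨eps, hepspos, ?_⟩
        have happ : ∀ p, ((x + eps • (Pi.single k (1:ℝ) - Pi.single i (1:ℝ)) : Fin n → ℝ)) p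
            = x p + ((if p = k then eps else 0) - (if p = i then eps else 0)) := by
          intro p
          by_cases h1 : p = k <;> by_cases h2 : p = i <;>
            simp [Pi.single_apply, h1, h2, smul_eq_mul] <;> split_ifs <;> ring
        have hsx : ∀ S : Finset (Fin n),
            ∑ p ∈ S, ((x + eps • (Pi.single k (1:ℝ) - Pi.single i (1:ℝ)) : Fin n → ℝ)) p
            = ∑ p ∈ S, x p + (if k ∈ S then eps else 0) - (if i ∈ S then eps else 0) := by
          intro S
          rw [Finset.sum_congr rfl (fun p _ => happ p), Finset.sum_add_distrib,
            Finset.sum_sub_distrib, Finset.sum_ite_eq' S k, Finset.sum_ite_eq' S i]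
          ring
        constructor
        · rw [hsx Finset.univ]
          simp [hxR]
        · intro j
          rw [hsx (Nset j)]
          by_cases hkS : k ∈ Nset j <;> by_cases hiS : i ∈ Nset j <;>
            simp only [if_pos, if_neg, hkS, hiS, if_true, if_false]
          · constructor <;> [skip; skip] <;> linarith [(hxLU j).1, (hxLU j).2]
          · -- k∈, i∉ : + eps
            have hwj : eps ≤ U j - ∑ p ∈ Nset j, x p := by
              have := heps_w j
              rw [hw] at this; simp only [if_pos (And.intro hkS hiS)] at this
              exact this
            constructor <;> linarith [(hxLU j).1]
          · -- i∈, k∉ : - eps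
            have hwj : eps ≤ (∑ p ∈ Nset j, x p) - L j := by
              have := heps_w j
              rw [hw] at this
              simp only [if_neg (by tauto : ¬(k ∈ Nset j ∧ i ∉ Nset j)),
                if_pos (And.intro hiS hkS)] at this
              exact this
            constructor <;> linarith [(hxLU j).2]
          · constructor <;> linarith [(hxLU j).1, (hxLU j).2]
      -- the new vector
      set d' : Fin n → ℝ := fun p =>
        d p + (if p = i then lam else 0) - (if p = k then lam else 0) with hd'
      have hSsum : ∀ S : Finset (Fin n), ∑ p ∈ S, d' p =
          ∑ p ∈ S, d p + (if i ∈ S then lam else 0) - (if k ∈ S then lam else 0) := by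
        intro S
        rw [hd']
        rw [Finset.sum_sub_distrib, Finset.sum_add_distrib,
          Finset.sum_ite_eq' S i, Finset.sum_ite_eq' S k]
      have hd'i : d' i = d i + lam := by
        rw [hd']; simp [hik]
      have hd'k : d' k = d k - lam := by
        rw [hd']; simp [Ne.symm hik]
      have hd'other : ∀ p, p ≠ i → p ≠ k → d' p = d p := by
        intro p h1 h2; rw [hd']; simp [h1, h2]
      have hsum' : ∑ p, d' p = 0 := by
        rw [hSsum Finset.univ]
        simp [hsum]
      have hI2' : ∀ j, ∑ p ∈ Nset j, x p = L j → 0 ≤ ∑ p ∈ Nset j, d' p := by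
        intro j htight
        rw [hSsum (Nset j)]
        by_cases hiS : i ∈ Nset j <;> by_cases hkS : k ∈ Nset j <;>
          simp only [hiS, hkS, if_true, if_false]
        · linarith [hI2 j htight]
        · linarith [hb j hiS hkS, hI2 j htight]
        · have hvj : v j = ∑ p ∈ Nset j, d p := by
            rw [hv]; simp only [if_pos (And.intro htight (And.intro hkS hiS))]
          linarith [hlam_v j, hvj ▸ hlam_v j]
        · linarith [hI2 j htight]
      have hI3' : ∀ j, ∑ p ∈ Nset j, x p = U j → ∑ p ∈ Nset j, d' p ≤ 0 := by
        intro j htight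
        rw [hSsum (Nset j)]
        by_cases hiS : i ∈ Nset j <;> by_cases hkS : k ∈ Nset j <;>
          simp only [hiS, hkS, if_true, if_false]
        · linarith [hI3 j htight]
        · have hvj : v j = -∑ p ∈ Nset j, d p := by
            rw [hv]
            have hc1 : ¬(∑ p ∈ Nset j, x p = L j ∧ k ∈ Nset j ∧ i ∉ Nset j) := by tauto
            simp only [if_neg hc1, if_pos (And.intro htight (And.intro hiS hkS))]
          linarith [hvj ▸ hlam_v j]
        · linarith [ha j hkS hiS, hI3 j htight]
        · linarith [hI3 j htight]
      -- the measure decreases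
      have hsub1 : Finset.univ.filter (fun p => d' p ≠ 0) ⊆
          Finset.univ.filter (fun p => d p ≠ 0) := by
        intro p hp
        have hp' := (Finset.mem_filter.mp hp).2
        refine Finset.mem_filter.mpr ⟨Finset.mem_univ p, ?_⟩
        by_cases h1 : p = i
        · rw [h1]; exact ne_of_lt hdi
        by_cases h2 : p = k
        · rw [h2]; exact ne_of_gt hdk
        · rw [← hd'other p h1 h2]; exact hp'
      have hsub2 : Finset.univ.filter (fun j : Fin m =>
            (∑ p ∈ Nset j, x p = L j) ∧ 0 < ∑ p ∈ Nset j, d' p) ⊆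
          Finset.univ.filter (fun j : Fin m =>
            (∑ p ∈ Nset j, x p = L j) ∧ 0 < ∑ p ∈ Nset j, d p) := by
        intro j hj
        obtain ⟨-, htight, hpos⟩ := Finset.mem_filter.mp hj
        refine Finset.mem_filter.mpr ⟨Finset.mem_univ j, htight, ?_⟩
        rw [hSsum (Nset j)] at hpos
        by_cases hiS : i ∈ Nset j <;> by_cases hkS : k ∈ Nset j <;>
          simp only [hiS, hkS, if_true, if_false] at hpos
        · linarith
        · linarith [hb j hiS hkS, hI2 j htight]
        · linarith
        · linarith
      have hsub3 : Finset.univ.filter (fun j : Fin m =>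
            (∑ p ∈ Nset j, x p = U j) ∧ ∑ p ∈ Nset j, d' p < 0) ⊆
          Finset.univ.filter (fun j : Fin m =>
            (∑ p ∈ Nset j, x p = U j) ∧ ∑ p ∈ Nset j, d p < 0) := by
        intro j hj
        obtain ⟨-, htight, hneg⟩ := Finset.mem_filter.mp hj
        refine Finset.mem_filter.mpr ⟨Finset.mem_univ j, htight, ?_⟩
        rw [hSsum (Nset j)] at hneg
        by_cases hiS : i ∈ Nset j <;> by_cases hkS : k ∈ Nset j <;>
          simp only [hiS, hkS, if_true, if_false] at hneg
        · linarith
        · linarith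
        · linarith [ha j hkS hiS, hI3 j htight]
        · linarith
      have hcard1 := Finset.card_le_card hsub1
      have hcard2 := Finset.card_le_card hsub2
      have hcard3 := Finset.card_le_card hsub3
      have hstrict :
          (Finset.univ.filter (fun p => d' p ≠ 0)).card
          + (Finset.univ.filter (fun j : Fin m =>
              (∑ p ∈ Nset j, x p = L j) ∧ 0 < ∑ p ∈ Nset j, d' p)).card
          + (Finset.univ.filter (fun j : Fin m =>
              (∑ p ∈ Nset j, x p = U j) ∧ ∑ p ∈ Nset j, d' p < 0)).card
          < (Finset.univ.filter (fun p => d p ≠ 0)).card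
          + (Finset.univ.filter (fun j : Fin m =>
              (∑ p ∈ Nset j, x p = L j) ∧ 0 < ∑ p ∈ Nset j, d p)).card
          + (Finset.univ.filter (fun j : Fin m =>
              (∑ p ∈ Nset j, x p = U j) ∧ ∑ p ∈ Nset j, d p < 0)).card := by
        have hlam_mem := Finset.min'_mem Λ hΛne
        rw [← hlamdef] at hlam_mem
        have case_i : lam = -d i →
            (Finset.univ.filter (fun p => d' p ≠ 0)).card
            < (Finset.univ.filter (fun p => d p ≠ 0)).card := by
          intro hli
          apply Finset.card_lt_card
          refine (Finset.ssubset_iff_of_subset hsub1).mpr ⟨i, ?_, ?_⟩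
          · exact Finset.mem_filter.mpr ⟨Finset.mem_univ i, ne_of_lt hdi⟩
          · intro hmem
            have := (Finset.mem_filter.mp hmem).2
            rw [hd'i, hli] at this
            simp at this
        have case_k : lam = d k →
            (Finset.univ.filter (fun p => d' p ≠ 0)).card
            < (Finset.univ.filter (fun p => d p ≠ 0)).card := by
          intro hlk
          apply Finset.card_lt_card
          refine (Finset.ssubset_iff_of_subset hsub1).mpr ⟨k, ?_, ?_⟩
          · exact Finset.mem_filter.mpr ⟨Finset.mem_univ k, ne_of_gt hdk⟩
          · intro hmem
            have := (Finset.mem_filter.mp hmem).2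
            rw [hd'k, hlk] at this
            simp at this
        rcases Finset.mem_insert.mp hlam_mem with hli | hlam_mem
        · have := case_i hli; omega
        rcases Finset.mem_insert.mp hlam_mem with hlk | hlam_mem
        · have := case_k hlk; omega
        obtain ⟨j, -, hvj⟩ := Finset.mem_image.mp hlam_mem
        by_cases c1 : ∑ p ∈ Nset j, x p = L j ∧ k ∈ Nset j ∧ i ∉ Nset j
        · -- lam = d_S, lower-tight j leaves second filter
          have hlamS : lam = ∑ p ∈ Nset j, d p := by
            rw [← hvj, hv]; simp only [if_pos c1]
          have hjin : j ∈ Finset.univ.filter (fun j : Fin m =>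
              (∑ p ∈ Nset j, x p = L j) ∧ 0 < ∑ p ∈ Nset j, d p) :=
            Finset.mem_filter.mpr ⟨Finset.mem_univ j, c1.1, by rw [← hlamS]; exact hlampos⟩
          have hjout : j ∉ Finset.univ.filter (fun j : Fin m =>
              (∑ p ∈ Nset j, x p = L j) ∧ 0 < ∑ p ∈ Nset j, d' p) := by
            intro hmem
            have hpos := (Finset.mem_filter.mp hmem).2.2
            rw [hSsum (Nset j)] at hpos
            rw [if_neg c1.2.2, if_pos c1.2.1] at hpos
            linarith [hlamS]
          have : (Finset.univ.filter (fun j : Fin m =>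
              (∑ p ∈ Nset j, x p = L j) ∧ 0 < ∑ p ∈ Nset j, d' p)).card
              < (Finset.univ.filter (fun j : Fin m =>
              (∑ p ∈ Nset j, x p = L j) ∧ 0 < ∑ p ∈ Nset j, d p)).card :=
            Finset.card_lt_card ((Finset.ssubset_iff_of_subset hsub2).mpr ⟨j, hjin, hjout⟩)
          omega
        by_cases c2 : ∑ p ∈ Nset j, x p = U j ∧ i ∈ Nset j ∧ k ∉ Nset j
        · have hlamS : lam = -∑ p ∈ Nset j, d p := by
            rw [← hvj, hv]; simp only [if_neg c1, if_pos c2]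
          have hjin : j ∈ Finset.univ.filter (fun j : Fin m =>
              (∑ p ∈ Nset j, x p = U j) ∧ ∑ p ∈ Nset j, d p < 0) :=
            Finset.mem_filter.mpr ⟨Finset.mem_univ j, c2.1, by linarith [hlamS]⟩
          have hjout : j ∉ Finset.univ.filter (fun j : Fin m =>
              (∑ p ∈ Nset j, x p = U j) ∧ ∑ p ∈ Nset j, d' p < 0) := by
            intro hmem
            have hneg := (Finset.mem_filter.mp hmem).2.2
            rw [hSsum (Nset j)] at hneg
            rw [if_pos c2.2.1, if_neg c2.2.2] at hneg
            linarith [hlamS]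
          have : (Finset.univ.filter (fun j : Fin m =>
              (∑ p ∈ Nset j, x p = U j) ∧ ∑ p ∈ Nset j, d' p < 0)).card
              < (Finset.univ.filter (fun j : Fin m =>
              (∑ p ∈ Nset j, x p = U j) ∧ ∑ p ∈ Nset j, d p < 0)).card :=
            Finset.card_lt_card ((Finset.ssubset_iff_of_subset hsub3).mpr ⟨j, hjin, hjout⟩)
          omega
        · have hli : lam = -d i := by rw [← hvj, hv]; simp only [if_neg c1, if_neg c2]
          have := case_i hli; omega
      -- the objective does not increase in the step
      have hstep : ∑ p, φ p (x p + d' p) ≤ ∑ p, φ p (x p + d p) := by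
        have hkmem : k ∈ Finset.univ.erase i :=
          Finset.mem_erase.mpr ⟨Ne.symm hik, Finset.mem_univ k⟩
        have split : ∀ (e : Fin n → ℝ), ∑ p, φ p (x p + e p) =
            φ i (x i + e i) + (φ k (x k + e k)
              + ∑ p ∈ (Finset.univ.erase i).erase k, φ p (x p + e p)) := by
          intro e
          rw [← Finset.add_sum_erase _ _ (Finset.mem_univ i),
            ← Finset.add_sum_erase _ _ hkmem]
        rw [split d', split d]
        have hrest : ∑ p ∈ (Finset.univ.erase i).erase k, φ p (x p + d' p)
            = ∑ p ∈ (Finset.univ.erase i).erase k, φ p (x p + d p) := by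
          refine Finset.sum_congr rfl (fun p hp => ?_)
          obtain ⟨hpk, hp'⟩ := Finset.mem_erase.mp hp
          obtain ⟨hpi, -⟩ := Finset.mem_erase.mp hp'
          rw [hd'other p hpi hpk]
        rw [hrest, hd'i, hd'k]
        have hA : φ i (x i + (d i + lam)) - φ i (x i + d i) ≤ leftDeriv (φ i) (x i) * lam := by
          have hs := slope_le_leftDeriv (hφ i)
            (show x i + d i < x i + (d i + lam) by linarith)
            (show x i + (d i + lam) ≤ x i by linarith)
          rw [show x i + (d i + lam) - (x i + d i) = lam by ring] at hs
          exact (div_le_iff₀ hlampos).mp hs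
        have hB : rightDeriv (φ k) (x k) * lam ≤ φ k (x k + d k) - φ k (x k + (d k - lam)) := by
          have hs := rightDeriv_le_slope (hφ k)
            (show x k ≤ x k + (d k - lam) by linarith)
            (show x k + (d k - lam) < x k + d k by linarith)
          rw [show x k + d k - (x k + (d k - lam)) = lam by ring] at hs
          exact (le_div_iff₀ hlampos).mp hs
        have h3 : leftDeriv (φ i) (x i) * lam ≤ rightDeriv (φ k) (x k) * lam :=
          mul_le_mul_of_nonneg_right hexch hlampos.le
        have := hA.trans (h3.trans hB)
        linarith
      exact (ih d' (by omega) hsum' hI2' hI3').trans hstep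
  intro z hz
  obtain ⟨hzR, hzLU⟩ := hz
  set d : Fin n → ℝ := fun p => z p - x p with hd
  have hfin := MAIN _ d le_rfl
    (by rw [Finset.sum_sub_distrib]; rw [hzR, hxR]; ring)
    (by intro j htight
        rw [Finset.sum_sub_distrib, htight]
        linarith [(hzLU j).1])
    (by intro j htight
        rw [Finset.sum_sub_distrib, htight]
        linarith [(hzLU j).2])
  calc ∑ p, φ p (x p) ≤ ∑ p, φ p (x p + d p) := hfin
    _ = ∑ p, φ p (z p) := Finset.sum_congr rfl (fun p _ => by rw [hd]; ring_nf)
end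

section
/- Let φᵢ : ℝ → ℝ be convex for i = 1,…,n, let x, z ∈ ℝⁿ, and suppose z - x = ∑_{(i,k)∈P} λ_{ik}(eᵏ - eⁱ) with λ_{ik} > 0 for all (i,k) ∈ P, where indices appearing as first components of pairs in P are disjoint from indices appearing as second components. If φₖ⁺(xₖ) ≥ φᵢ⁻(xᵢ) for all (i,k) ∈ P, then ∑ᵢ φᵢ(zᵢ) ≥ ∑ᵢ φᵢ(xᵢ). -/
open Set

lemma convexOn_diffWithinAt_Ioi {f : ℝ → ℝ} (hf : ConvexOn ℝ univ f) (a : ℝ) :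
    DifferentiableWithinAt ℝ f (Ioi a) a := by
  have hmono : MonotoneOn (slope f a) (univ \ {a}) := hf.slope_mono (mem_univ a)
  have hmonoIoi : MonotoneOn (slope f a) (Ioi a) := by
    intro u hu v hv huv
    exact hmono ⟨mem_univ _, (ne_of_gt hu)⟩ ⟨mem_univ _, (ne_of_gt hv)⟩ huv
  have hbdd : BddBelow (slope f a '' Ioi a) := by
    refine ⟨slope f a (a - 1), ?_⟩
    rintro y ⟨u, hu, rfl⟩
    exact hmono ⟨mem_univ _, by simp⟩ ⟨mem_univ _, (ne_of_gt hu)⟩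
      (by linarith [mem_Ioi.mp hu])
  have htend := hmonoIoi.tendsto_nhdsGT hbdd
  have : HasDerivWithinAt f (sInf (slope f a '' Ioi a)) (Ioi a) a :=
    (hasDerivWithinAt_iff_tendsto_slope' (notMem_Ioi_self)).2 htend
  exact this.differentiableWithinAt

lemma convexOn_diffWithinAt_Iio {f : ℝ → ℝ} (hf : ConvexOn ℝ univ f) (a : ℝ) :
    DifferentiableWithinAt ℝ f (Iio a) a := by
  have hmono : MonotoneOn (slope f a) (univ \ {a}) := hf.slope_mono (mem_univ a)
  have hmonoIio : MonotoneOn (slope f a) (Iio a) := by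
    intro u hu v hv huv
    exact hmono ⟨mem_univ _, (ne_of_lt hu)⟩ ⟨mem_univ _, (ne_of_lt hv)⟩ huv
  have hbdd : BddAbove (slope f a '' Iio a) := by
    refine ⟨slope f a (a + 1), ?_⟩
    rintro y ⟨u, hu, rfl⟩
    exact hmono ⟨mem_univ _, (ne_of_lt hu)⟩ ⟨mem_univ _, by simp⟩
      (by linarith [mem_Iio.mp hu])
  have htend := hmonoIio.tendsto_nhdsLT hbdd
  have : HasDerivWithinAt f (sSup (slope f a '' Iio a)) (Iio a) a :=
    (hasDerivWithinAt_iff_tendsto_slope' (notMem_Iio_self)).2 htend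
  exact this.differentiableWithinAt

/-- Subgradient inequality via one-sided derivative chosen by direction. -/
lemma subgrad_ineq {f : ℝ → ℝ} (hf : ConvexOn ℝ univ f) (a b : ℝ) :
    (if a ≤ b then rightDeriv f a else leftDeriv f a) * (b - a) ≤ f b - f a := by
  rcases lt_trichotomy a b with h | h | h
  · rw [if_pos h.le]
    have h1 : rightDeriv f a ≤ slope f a b :=
      hf.rightDeriv_le_slope (mem_univ a) (mem_univ b) h (convexOn_diffWithinAt_Ioi hf a)
    rw [slope_def_field] at h1
    have hba : (0:ℝ) < b - a := by linarith
    calc rightDeriv f a * (b - a) ≤ ((f b - f a) / (b - a)) * (b - a) := by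
          exact mul_le_mul_of_nonneg_right h1 hba.le
      _ = f b - f a := by field_simp
  · subst h; simp
  · rw [if_neg (not_le.mpr h)]
    have h1 : slope f b a ≤ leftDeriv f a :=
      hf.slope_le_leftDeriv (mem_univ b) (mem_univ a) h (convexOn_diffWithinAt_Iio hf a)
    rw [slope_def_field] at h1
    have hab : (0:ℝ) < a - b := by linarith
    have := mul_le_mul_of_nonneg_right h1 hab.le
    have h2 : (f a - f b) / (a - b) * (a - b) = f a - f b := by field_simp
    nlinarith [this, h2]

theorem key_subgradient_inequality {n : ℕ}
    (φ : Fin n → ℝ → ℝ) (hφ : ∀ i, ConvexOn ℝ Set.univ (φ i))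
    (x z : Fin n → ℝ)
    (P : Finset (Fin n × Fin n)) (lam : Fin n × Fin n → ℝ)
    (hlam : ∀ p ∈ P, 0 < lam p)
    (hdecomp : z - x = ∑ p ∈ P, lam p • (Pi.single p.2 (1 : ℝ) - Pi.single p.1 (1 : ℝ)))
    -- first components of pairs in P are disjoint from second components
    (hdisj : ∀ p ∈ P, ∀ q ∈ P, p.1 ≠ q.2)
    (hcond : ∀ p ∈ P, leftDeriv (φ p.1) (x p.1) ≤ rightDeriv (φ p.2) (x p.2)) :
    ∑ i, φ i (x i) ≤ ∑ i, φ i (z i) := by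
  classical
  -- the chosen subgradient at each coordinate
  set D : Fin n → ℝ := fun i =>
    if x i ≤ z i then rightDeriv (φ i) (x i) else leftDeriv (φ i) (x i) with hD
  -- componentwise decomposition
  have hcomp : ∀ i, z i - x i = ∑ p ∈ P, lam p *
      ((if p.2 = i then (1:ℝ) else 0) - (if p.1 = i then (1:ℝ) else 0)) := by
    intro i
    have := congrFun hdecomp i
    simp only [Pi.sub_apply, Finset.sum_apply, Pi.smul_apply, smul_eq_mul] at this
    rw [this]
    refine Finset.sum_congr rfl fun p _ => ?_
    congr 1
    simp [Pi.single_apply, eq_comm]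
  -- sinks increase, sources strictly decrease
  have hsink : ∀ p ∈ P, x p.2 ≤ z p.2 := by
    intro p hp
    have h := hcomp p.2
    have : (0:ℝ) ≤ z p.2 - x p.2 := by
      rw [h]
      refine Finset.sum_nonneg fun q hq => ?_
      have hne : q.1 ≠ p.2 := hdisj q hq p hp
      rw [if_neg hne]
      have := (hlam q hq).le
      split <;> simp_all
    linarith
  have hsource : ∀ p ∈ P, ¬ (x p.1 ≤ z p.1) := by
    intro p hp
    have h := hcomp p.1
    have hneg : z p.1 - x p.1 < 0 := by
      rw [h]
      have hstrict : ∑ q ∈ P, lam q *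
          ((if q.2 = p.1 then (1:ℝ) else 0) - (if q.1 = p.1 then (1:ℝ) else 0))
          < ∑ q ∈ P, (0:ℝ) := by
        refine Finset.sum_lt_sum (fun q hq => ?_) ⟨p, hp, ?_⟩
        · have hne : p.1 ≠ q.2 := hdisj p hp q hq
          rw [if_neg (Ne.symm hne)]
          have := (hlam q hq).le
          split <;> simp_all
        · have hne : p.1 ≠ p.2 := hdisj p hp p hp
          rw [if_neg (Ne.symm hne), if_pos rfl]
          have := hlam p hp
          nlinarith
      simpa using hstrict
    intro hle; linarith
  have hDsink : ∀ p ∈ P, D p.2 = rightDeriv (φ p.2) (x p.2) := fun p hp => by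
    simp [hD, hsink p hp]
  have hDsource : ∀ p ∈ P, D p.1 = leftDeriv (φ p.1) (x p.1) := fun p hp => by
    simp [hD, hsource p hp]
  -- subgradient inequality summed over coordinates
  have hsub : ∑ i, D i * (z i - x i) ≤ ∑ i, (φ i (z i) - φ i (x i)) := by
    refine Finset.sum_le_sum fun i _ => ?_
    exact subgrad_ineq (hφ i) (x i) (z i)
  -- compute the left sum
  have hswap : ∑ i, D i * (z i - x i) = ∑ p ∈ P, lam p * (D p.2 - D p.1) := by
    have : ∀ i, D i * (z i - x i) = ∑ p ∈ P, lam p *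
        (D i * ((if p.2 = i then (1:ℝ) else 0) - (if p.1 = i then (1:ℝ) else 0))) := by
      intro i
      rw [hcomp i, Finset.mul_sum]
      exact Finset.sum_congr rfl fun p _ => by ring
    simp_rw [this]
    rw [Finset.sum_comm]
    refine Finset.sum_congr rfl fun p hp => ?_
    rw [← Finset.mul_sum]
    congr 1
    have h1 : ∑ i, D i * ((if p.2 = i then (1:ℝ) else 0) - (if p.1 = i then (1:ℝ) else 0))
        = ∑ i, ((if p.2 = i then D i else 0) - (if p.1 = i then D i else 0)) := by
      refine Finset.sum_congr rfl fun i _ => ?_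
      split <;> split <;> ring
    rw [h1, Finset.sum_sub_distrib]
    simp [Finset.sum_ite_eq, eq_comm]
  have hpos : 0 ≤ ∑ p ∈ P, lam p * (D p.2 - D p.1) := by
    refine Finset.sum_nonneg fun p hp => ?_
    have h1 : D p.1 ≤ D p.2 := by
      rw [hDsink p hp, hDsource p hp]; exact hcond p hp
    have := (hlam p hp).le
    nlinarith
  have : 0 ≤ ∑ i, (φ i (z i) - φ i (x i)) := by
    calc (0:ℝ) ≤ ∑ p ∈ P, lam p * (D p.2 - D p.1) := hpos
      _ = ∑ i, D i * (z i - x i) := hswap.symm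
      _ ≤ _ := hsub
  rw [Finset.sum_sub_distrib] at this
  linarith
end
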